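/- Let X be a real reflexive Banach space and F : X → X* be hemicontinuous, monotone, and coercive (⟨F(x), x⟩/‖x‖ → ∞ as ‖x‖ → ∞). Then F is surjective onto X*. -/

import Mathlib

open NormedSpace

namespace BrowderMintyAux

open Filter Topology Finset

noncomputable section

/-- The standard pairing on `Fin n → ℝ`. -/
def dotp {n : ℕ} (x y : Fin n → ℝ) : ℝ := ∑ i, x i * y i

variable {n : ℕ}

lemma dotp_comm (x y : Fin n → ℝ) : dotp x y = dotp y x := by
  unfold dotp; exact Finset.sum_congr rfl fun i _ => mul_comm _ _

lemma dotp_add_left (x y z : Fin n → ℝ) : dotp (x + y) z = dotp x z + dotp y z := by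
  unfold dotp; rw [← Finset.sum_add_distrib]
  exact Finset.sum_congr rfl fun i _ => by simp [add_mul]

lemma dotp_sub_left (x y z : Fin n → ℝ) : dotp (x - y) z = dotp x z - dotp y z := by
  unfold dotp; rw [← Finset.sum_sub_distrib]
  exact Finset.sum_congr rfl fun i _ => by simp [sub_mul]

lemma dotp_smul_left (t : ℝ) (x z : Fin n → ℝ) : dotp (t • x) z = t * dotp x z := by
  unfold dotp; rw [Finset.mul_sum]
  exact Finset.sum_congr rfl fun i _ => by simp [mul_assoc]

lemma dotp_neg_right (x z : Fin n → ℝ) : dotp x (-z) = - dotp x z := by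
  unfold dotp; rw [← Finset.sum_neg_distrib]
  exact Finset.sum_congr rfl fun i _ => by simp

lemma dotp_smul_right (t : ℝ) (x z : Fin n → ℝ) : dotp x (t • z) = t * dotp x z := by
  rw [dotp_comm, dotp_smul_left, dotp_comm]

lemma dotp_self_nonneg (x : Fin n → ℝ) : 0 ≤ dotp x x :=
  Finset.sum_nonneg fun i _ => mul_self_nonneg _

lemma eq_zero_of_dotp_self_nonpos {x : Fin n → ℝ} (h : dotp x x ≤ 0) : x = 0 := by
  have h0 : dotp x x = 0 := le_antisymm h (dotp_self_nonneg x)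
  funext i
  have := (Finset.sum_eq_zero_iff_of_nonneg (fun i _ => mul_self_nonneg (x i))).1 h0 i
    (Finset.mem_univ i)
  exact mul_self_eq_zero.1 this

lemma continuous_dotp : Continuous fun p : (Fin n → ℝ) × (Fin n → ℝ) => dotp p.1 p.2 := by
  unfold dotp
  exact continuous_finset_sum _ fun i _ =>
    ((continuous_apply i).comp continuous_fst).mul ((continuous_apply i).comp continuous_snd)

lemma continuous_snoc :
    Continuous fun p : (Fin n → ℝ) × ℝ => (Fin.snoc p.1 p.2 : Fin (n + 1) → ℝ) := by
  apply continuous_pi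
  intro i
  refine Fin.lastCases ?_ ?_ i
  · simpa [Fin.snoc_last] using (continuous_snd : Continuous fun p : (Fin n → ℝ) × ℝ => p.2)
  · intro j
    simp [Fin.snoc_castSucc]
    exact (continuous_apply j).comp (continuous_fst : Continuous fun p : (Fin n → ℝ) × ℝ => p.1)

/-- surjectivity of continuous strongly monotone maps on ℝ^n, by induction on n -/
theorem surj_of_strongMono : ∀ (n : ℕ) (f : (Fin n → ℝ) → (Fin n → ℝ)) (c : ℝ), 0 < c →
    Continuous f → (∀ x y, c * dotp (x - y) (x - y) ≤ dotp (f x - f y) (x - y)) →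
    Function.Surjective f := by
  intro n
  induction n with
  | zero =>
    intro f c _ _ _ y
    exact ⟨y, Subsingleton.elim _ _⟩
  | succ n ih =>
    intro f c hc hf hm y
    set L : Fin (n + 1) := Fin.last n with hL
    -- the scalar function in the last coordinate
    set g : (Fin n → ℝ) → ℝ → ℝ := fun z t => f (Fin.snoc z t) L with hgdef
    have hsub : ∀ (z : Fin n → ℝ) (t s : ℝ),
        (Fin.snoc z t - Fin.snoc z s : Fin (n+1) → ℝ) = Fin.snoc (0 : Fin n → ℝ) (t - s) := by
      intro z t s
      funext i
      refine Fin.lastCases ?_ ?_ i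
      · simp [Fin.snoc_last]
      · intro j; simp [Fin.snoc_castSucc]
    have hdot_last : ∀ (a : Fin (n+1) → ℝ) (d : ℝ),
        dotp a (Fin.snoc 0 d) = a L * d := by
      intro a d
      unfold dotp
      rw [Fin.sum_univ_castSucc]
      simp [Fin.snoc_castSucc, Fin.snoc_last, hL]
    -- strong increase of g
    have hg_incr : ∀ z s t, s ≤ t → c * (t - s) ≤ g z t - g z s := by
      intro z s t hst
      rcases eq_or_lt_of_le hst with h | h
      · simp [h]
      · have key := hm (Fin.snoc z t) (Fin.snoc z s)
        rw [hsub] at key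
        have h1 : dotp (Fin.snoc z t - Fin.snoc z s : Fin (n+1) → ℝ)
            (Fin.snoc 0 (t - s)) = (t - s) * (t - s) := by
          rw [hsub, hdot_last]; simp only [hL, Fin.snoc_last]
        have h2 : dotp (f (Fin.snoc z t) - f (Fin.snoc z s)) (Fin.snoc 0 (t - s))
            = (g z t - g z s) * (t - s) := by
          rw [hdot_last]; simp [hgdef]
        rw [hsub] at h1
        rw [h1, h2] at key
        have hts : (0:ℝ) < t - s := sub_pos.2 h
        have := le_of_mul_le_mul_right (by linarith [key] : c * (t - s) * (t - s) ≤ (g z t - g z s) * (t - s)) hts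
        linarith
    have hg_abs : ∀ z s t, c * |t - s| ≤ |g z t - g z s| := by
      intro z s t
      rcases le_total s t with h | h
      · have h1 := hg_incr z s t h
        have h2 : 0 ≤ g z t - g z s := le_trans (mul_nonneg hc.le (by linarith)) h1
        rw [abs_of_nonneg (by linarith : (0:ℝ) ≤ t - s), abs_of_nonneg h2]
        exact h1
      · have h1 := hg_incr z t s h
        have h2 : 0 ≤ g z s - g z t := le_trans (mul_nonneg hc.le (by linarith)) h1
        rw [abs_of_nonpos (by linarith : t - s ≤ 0), abs_of_nonpos (by linarith : g z t - g z s ≤ 0)]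
        simpa [neg_sub] using h1
    have hg_cont : ∀ z, Continuous (g z) := by
      intro z
      exact (continuous_apply L).comp
        (hf.comp (continuous_snoc.comp (continuous_const.prodMk continuous_id)))
    -- existence and uniqueness of the solution in the last coordinate
    have hex : ∀ z, ∃ t, g z t = y L := by
      intro z
      set a := y L
      set T : ℝ := |a - g z 0| / c + 1 with hT
      have hTpos : 0 < T := by positivity
      have hup : a ≤ g z T := by
        have := hg_incr z 0 T (le_of_lt hTpos)
        have hcT : c * T = |a - g z 0| + c := by
          rw [hT]; field_simp
        have habs : a - g z 0 ≤ |a - g z 0| := le_abs_self _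
        linarith
      have hdown : g z (-T) ≤ a := by
        have := hg_incr z (-T) 0 (by linarith)
        have hcT : c * (0 - -T) = |a - g z 0| + c := by
          rw [hT]; field_simp; ring
        have habs : -(a - g z 0) ≤ |a - g z 0| := neg_le_abs _
        linarith
      have hIcc : a ∈ Set.Icc (g z (-T)) (g z T) := ⟨hdown, hup⟩
      have := intermediate_value_Icc (by linarith : -T ≤ T) (hg_cont z).continuousOn
      obtain ⟨t, _, ht⟩ := this hIcc
      exact ⟨t, ht⟩
    set τ : (Fin n → ℝ) → ℝ := fun z => (hex z).choose with hτdef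
    have hτ : ∀ z, g z (τ z) = y L := fun z => (hex z).choose_spec
    -- continuity of τ
    have hτcont : Continuous τ := by
      rw [continuous_iff_continuousAt]
      intro z₀
      have hbound : ∀ z, dist (τ z) (τ z₀) ≤ c⁻¹ * |g z (τ z₀) - y L| := by
        intro z
        have := hg_abs z (τ z₀) (τ z)
        rw [hτ z] at this
        rw [Real.dist_eq]
        rw [abs_sub_comm (g z (τ z₀)) (y L)]
        calc |τ z - τ z₀| = c⁻¹ * (c * |τ z - τ z₀|) := by field_simp
        _ ≤ c⁻¹ * |y L - g z (τ z₀)| := by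
            apply mul_le_mul_of_nonneg_left this (by positivity)
      have hcont2 : Continuous fun z => c⁻¹ * |g z (τ z₀) - y L| := by
        apply continuous_const.mul
        apply Continuous.abs
        apply Continuous.sub _ continuous_const
        exact (continuous_apply L).comp
          (hf.comp (continuous_snoc.comp (continuous_id.prodMk continuous_const)))
      have hval : c⁻¹ * |g z₀ (τ z₀) - y L| = 0 := by
        rw [hτ z₀]; simp
      unfold ContinuousAt
      rw [tendsto_iff_dist_tendsto_zero]
      apply squeeze_zero (fun z => dist_nonneg) hbound
      have := hcont2.tendsto z₀
      rwa [hval] at this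
    -- the reduced map
    set h : (Fin n → ℝ) → (Fin n → ℝ) := fun z i => f (Fin.snoc z (τ z)) i.castSucc with hhdef
    have hh_cont : Continuous h := by
      apply continuous_pi
      intro i
      exact (continuous_apply i.castSucc).comp
        (hf.comp (continuous_snoc.comp (continuous_id.prodMk hτcont)))
    have hh_mono : ∀ z w, c * dotp (z - w) (z - w) ≤ dotp (h z - h w) (z - w) := by
      intro z w
      set Z : Fin (n+1) → ℝ := Fin.snoc z (τ z) with hZ
      set W : Fin (n+1) → ℝ := Fin.snoc w (τ w) with hW
      have claim1 : dotp (f Z - f W) (Z - W) = dotp (h z - h w) (z - w) := by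
        unfold dotp
        rw [Fin.sum_univ_castSucc]
        have hlast : (f Z - f W) L * (Z - W) L = 0 := by
          have h1 : f Z L = y L := hτ z
          have h2 : f W L = y L := hτ w
          simp [Pi.sub_apply, h1, h2]
        rw [hlast, add_zero]
        apply Finset.sum_congr rfl
        intro i _
        simp [hZ, hW, hhdef, Pi.sub_apply, Fin.snoc_castSucc]
      have claim2 : dotp (z - w) (z - w) ≤ dotp (Z - W) (Z - W) := by
        unfold dotp
        rw [Fin.sum_univ_castSucc]
        have : ∑ i : Fin n, (z - w) i * (z - w) i
            = ∑ i : Fin n, (Z - W) i.castSucc * (Z - W) i.castSucc := by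
          apply Finset.sum_congr rfl
          intro i _
          simp [hZ, hW, Pi.sub_apply, Fin.snoc_castSucc]
        rw [← this]
        nlinarith [mul_self_nonneg ((Z - W) L)]
      calc c * dotp (z - w) (z - w) ≤ c * dotp (Z - W) (Z - W) :=
            mul_le_mul_of_nonneg_left claim2 (le_of_lt hc)
        _ ≤ dotp (f Z - f W) (Z - W) := hm Z W
        _ = dotp (h z - h w) (z - w) := claim1
    obtain ⟨z, hz⟩ := ih h c hc hh_cont hh_mono (fun i => y i.castSucc)
    refine ⟨Fin.snoc z (τ z), ?_⟩
    funext i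
    refine Fin.lastCases ?_ ?_ i
    · exact hτ z
    · intro j
      exact congrFun hz j

/-- Minty's trick in finite dimensions. -/
theorem minty_fin (T : (Fin n → ℝ) → (Fin n → ℝ))
    (hemi : ∀ x v, Continuous fun t : ℝ => dotp (T (x + t • v)) v)
    (x g : Fin n → ℝ) (hg : ∀ w, 0 ≤ dotp (g - T w) (x - w)) : g = T x := by
  have key : ∀ v, dotp (g - T x) v ≤ 0 := by
    intro v
    have h1 : ∀ t : ℝ, 0 < t → dotp (g - T (x + t • v)) v ≤ 0 := by
      intro t ht
      have := hg (x + t • v)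
      have hxw : x - (x + t • v) = -(t • v) := by abel
      rw [hxw, dotp_neg_right, dotp_smul_right] at this
      nlinarith
    have h2 : Tendsto (fun t : ℝ => dotp (g - T (x + t • v)) v) (𝓝[>] 0)
        (𝓝 (dotp (g - T x) v)) := by
      have hcont : Continuous fun t : ℝ => dotp (g - T (x + t • v)) v := by
        simp only [dotp_sub_left]
        exact continuous_const.sub (hemi x v)
      have h3 : Tendsto (fun t : ℝ => dotp (g - T (x + t • v)) v) (𝓝 0)
          (𝓝 (dotp (g - T (x + (0:ℝ) • v)) v)) := hcont.tendsto 0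
      rw [show x + (0:ℝ) • v = x by simp] at h3
      exact h3.mono_left nhdsWithin_le_nhds
    exact le_of_tendsto h2 (eventually_nhdsWithin_of_forall fun t ht => h1 t ht)
  have := key (g - T x)
  have := eq_zero_of_dotp_self_nonpos this
  exact sub_eq_zero.1 this

set_option maxHeartbeats 1000000 in
/-- A monotone, hemicontinuous map in finite dimensions is continuous. -/
theorem continuous_of_mono_hemi (T : (Fin n → ℝ) → (Fin n → ℝ))
    (mono : ∀ x y, 0 ≤ dotp (T x - T y) (x - y))
    (hemi : ∀ x v, Continuous fun t : ℝ => dotp (T (x + t • v)) v) :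
    Continuous T := by
  rw [continuous_iff_seqContinuous]
  intro u x hu
  -- Step 1: the sequence T (u k) is bounded
  have hbdd : ∃ C, ∀ k, ‖T (u k)‖ ≤ C := by
    by_contra hC
    push_neg at hC
    have hfreq : ∀ m : ℕ, ∃ᶠ k in atTop, (m : ℝ) < ‖T (u k)‖ := by
      intro m
      rw [frequently_atTop]
      intro N
      by_contra h'
      push_neg at h'
      obtain ⟨k, hk⟩ := hC ((m : ℝ) + ∑ j ∈ Finset.range N, ‖T (u j)‖)
      rcases lt_or_ge k N with hkN | hkN
      · have h1 : ‖T (u k)‖ ≤ ∑ j ∈ Finset.range N, ‖T (u j)‖ :=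
          Finset.single_le_sum (f := fun j => ‖T (u j)‖) (fun j _ => norm_nonneg _)
            (Finset.mem_range.2 hkN)
        have : (0:ℝ) ≤ (m:ℝ) := Nat.cast_nonneg m
        linarith
      · have h1 : ‖T (u k)‖ ≤ (m : ℝ) := h' k hkN
        have h2 : (0:ℝ) ≤ ∑ j ∈ Finset.range N, ‖T (u j)‖ :=
          Finset.sum_nonneg fun j _ => norm_nonneg _
        linarith
    obtain ⟨φ, hφmono, hφ⟩ := Filter.extraction_forall_of_frequently hfreq
    have hpos : ∀ m, (0:ℝ) < ‖T (u (φ m))‖ := fun m =>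
      lt_of_le_of_lt (Nat.cast_nonneg m) (hφ m)
    set Y : ℕ → (Fin n → ℝ) := fun m => ‖T (u (φ m))‖⁻¹ • T (u (φ m)) with hY
    have hYnorm : ∀ m, ‖Y m‖ = 1 := by
      intro m
      rw [hY]
      simp only [norm_smul, norm_inv, norm_norm]
      exact inv_mul_cancel₀ (ne_of_gt (hpos m))
    have hYball : ∀ m, Y m ∈ Metric.closedBall (0 : Fin n → ℝ) 1 := by
      intro m
      rw [Metric.mem_closedBall, dist_zero_right, hYnorm m]
    obtain ⟨g, _, ψ, hψmono, hψ⟩ :=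
      (isCompact_closedBall (0 : Fin n → ℝ) 1).tendsto_subseq hYball
    have hgnorm : ‖g‖ = 1 := by
      have h1 : Tendsto (fun m => ‖Y (ψ m)‖) atTop (𝓝 ‖g‖) :=
        (continuous_norm.tendsto g).comp hψ
      have h2 : Tendsto (fun m => ‖Y (ψ m)‖) atTop (𝓝 1) := by
        simp only [hYnorm]; exact tendsto_const_nhds
      exact tendsto_nhds_unique h1 h2
    -- the norms along the subsequence tend to infinity
    have hnorm_top : Tendsto (fun m => ‖T (u (φ (ψ m)))‖) atTop atTop := by
      apply tendsto_atTop_mono (fun m => le_of_lt (hφ (ψ m)))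
      exact tendsto_natCast_atTop_atTop.comp hψmono.tendsto_atTop
    have hinv0 : Tendsto (fun m => ‖T (u (φ (ψ m)))‖⁻¹) atTop (𝓝 0) :=
      hnorm_top.inv_tendsto_atTop
    have hux : Tendsto (fun m => u (φ (ψ m))) atTop (𝓝 x) :=
      hu.comp ((hφmono.comp hψmono).tendsto_atTop)
    have key : ∀ w, 0 ≤ dotp g (x - w) := by
      intro w
      have hineq : ∀ m, ‖T (u (φ (ψ m)))‖⁻¹ * dotp (T w) (u (φ (ψ m)) - w)
          ≤ dotp (Y (ψ m)) (u (φ (ψ m)) - w) := by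
        intro m
        set a := u (φ (ψ m))
        have h0 := mono a w
        rw [dotp_sub_left] at h0
        have h1 : dotp (T w) (a - w) ≤ dotp (T a) (a - w) := by linarith
        rw [hY, dotp_smul_left]
        exact mul_le_mul_of_nonneg_left h1 (inv_nonneg.2 (norm_nonneg _))
      have hL : Tendsto (fun m => ‖T (u (φ (ψ m)))‖⁻¹ * dotp (T w) (u (φ (ψ m)) - w))
          atTop (𝓝 0) := by
        have hd : Tendsto (fun m => dotp (T w) (u (φ (ψ m)) - w)) atTop
            (𝓝 (dotp (T w) (x - w))) := by
          have : Tendsto (fun m => ((T w : Fin n → ℝ), u (φ (ψ m)) - w)) atTop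
              (𝓝 (T w, x - w)) :=
            tendsto_const_nhds.prodMk_nhds (hux.sub tendsto_const_nhds)
          exact (continuous_dotp.tendsto _).comp this
        simpa using hinv0.mul hd
      have hR : Tendsto (fun m => dotp (Y (ψ m)) (u (φ (ψ m)) - w)) atTop
          (𝓝 (dotp g (x - w))) := by
        have : Tendsto (fun m => (Y (ψ m), u (φ (ψ m)) - w)) atTop (𝓝 (g, x - w)) :=
          hψ.prodMk_nhds (hux.sub tendsto_const_nhds)
        exact (continuous_dotp.tendsto _).comp this
      exact le_of_tendsto_of_tendsto' hL hR hineq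
    have hkey := key (x + g)
    have : x - (x + g) = -g := by abel
    rw [this, dotp_neg_right] at hkey
    have hg0 : g = 0 := eq_zero_of_dotp_self_nonpos (by linarith)
    rw [hg0, norm_zero] at hgnorm
    exact one_ne_zero hgnorm.symm
  -- Step 2: convergence via subsequences
  obtain ⟨C, hC⟩ := hbdd
  apply tendsto_of_subseq_tendsto
  intro ns hns
  have hball : ∀ k, T (u (ns k)) ∈ Metric.closedBall (0 : Fin n → ℝ) C := by
    intro k
    rw [Metric.mem_closedBall, dist_zero_right]
    exact hC _
  obtain ⟨g, _, ψ, hψmono, hψ⟩ :=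
    (isCompact_closedBall (0 : Fin n → ℝ) C).tendsto_subseq hball
  have hux : Tendsto (fun k => u (ns (ψ k))) atTop (𝓝 x) :=
    hu.comp (hns.comp hψmono.tendsto_atTop)
  have hglim : ∀ w, 0 ≤ dotp (g - T w) (x - w) := by
    intro w
    have hineq : ∀ k, 0 ≤ dotp (T (u (ns (ψ k))) - T w) (u (ns (ψ k)) - w) :=
      fun k => mono _ _
    have hlim : Tendsto (fun k => dotp (T (u (ns (ψ k))) - T w) (u (ns (ψ k)) - w))
        atTop (𝓝 (dotp (g - T w) (x - w))) := by
      have : Tendsto (fun k => (T (u (ns (ψ k))) - T w, u (ns (ψ k)) - w)) atTop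
          (𝓝 (g - T w, x - w)) :=
        (hψ.sub tendsto_const_nhds).prodMk_nhds (hux.sub tendsto_const_nhds)
      exact (continuous_dotp.tendsto _).comp this
    exact ge_of_tendsto hlim (Eventually.of_forall hineq)
  have hgTx : g = T x := minty_fin T hemi x g hglim
  exact ⟨ψ, by rw [← hgTx]; exact hψ⟩

/-- Solvability for a monotone hemicontinuous map with an a-priori bound. -/
theorem findim_solve (T : (Fin n → ℝ) → (Fin n → ℝ))
    (mono : ∀ x y, 0 ≤ dotp (T x - T y) (x - y))
    (hemi : ∀ x v, Continuous fun t : ℝ => dotp (T (x + t • v)) v)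
    (β : Fin n → ℝ) (R : ℝ)
    (hco : ∀ x, dotp (T x) x ≤ dotp β x → dotp x x ≤ R) :
    ∃ x, T x = β := by
  have hTc : Continuous T := continuous_of_mono_hemi T mono hemi
  have hsol : ∀ k : ℕ, ∃ x, T x + ((k:ℝ) + 1)⁻¹ • x = β := by
    intro k
    set ε : ℝ := ((k:ℝ) + 1)⁻¹ with hε
    have hεpos : 0 < ε := by positivity
    have hmono' : ∀ x y, ε * dotp (x - y) (x - y)
        ≤ dotp ((T x + ε • x) - (T y + ε • y)) (x - y) := by
      intro x y
      have hre : (T x + ε • x) - (T y + ε • y) = (T x - T y) + ε • (x - y) := by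
        rw [smul_sub]; abel
      rw [hre, dotp_add_left, dotp_smul_left]
      have := mono x y
      linarith
    have hcont : Continuous fun x => T x + ε • x :=
      hTc.add (continuous_id.const_smul ε)
    exact surj_of_strongMono n _ ε hεpos hcont hmono' β
  set xs : ℕ → (Fin n → ℝ) := fun k => (hsol k).choose with hxs
  have hxspec : ∀ k, T (xs k) + ((k:ℝ) + 1)⁻¹ • xs k = β := fun k => (hsol k).choose_spec
  have hbound : ∀ k, dotp (xs k) (xs k) ≤ R := by
    intro k
    apply hco
    have h1 : T (xs k) = β - ((k:ℝ) + 1)⁻¹ • xs k := by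
      rw [← hxspec k]; abel
    rw [h1, dotp_sub_left, dotp_smul_left]
    have h2 : 0 ≤ ((k:ℝ) + 1)⁻¹ * dotp (xs k) (xs k) := by
      apply mul_nonneg (by positivity) (dotp_self_nonneg _)
    linarith
  have hnorm : ∀ k, xs k ∈ Metric.closedBall (0 : Fin n → ℝ) (Real.sqrt R) := by
    intro k
    rw [Metric.mem_closedBall, dist_zero_right]
    rw [pi_norm_le_iff_of_nonneg (Real.sqrt_nonneg R)]
    intro i
    have h1 : xs k i * xs k i ≤ dotp (xs k) (xs k) := by
      unfold dotp
      exact Finset.single_le_sum (f := fun j => xs k j * xs k j)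
        (fun j _ => mul_self_nonneg _) (Finset.mem_univ i)
    have h2 : xs k i * xs k i ≤ R := le_trans h1 (hbound k)
    have h3 : Real.sqrt (xs k i * xs k i) ≤ Real.sqrt R := Real.sqrt_le_sqrt h2
    rwa [Real.sqrt_mul_self_eq_abs, ← Real.norm_eq_abs] at h3
  obtain ⟨xb, _, ψ, hψmono, hψ⟩ :=
    (isCompact_closedBall (0 : Fin n → ℝ) (Real.sqrt R)).tendsto_subseq hnorm
  refine ⟨xb, ?_⟩
  have hT : Tendsto (fun k => T (xs (ψ k))) atTop (𝓝 (T xb)) := (hTc.tendsto _).comp hψ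
  have hε0 : Tendsto (fun k => ((ψ k : ℝ) + 1)⁻¹) atTop (𝓝 0) := by
    apply Tendsto.inv_tendsto_atTop
    apply tendsto_atTop_add_const_right
    exact tendsto_natCast_atTop_atTop.comp hψmono.tendsto_atTop
  have hsmul : Tendsto (fun k => ((ψ k : ℝ) + 1)⁻¹ • xs (ψ k)) atTop (𝓝 (0 : Fin n → ℝ)) := by
    have := hε0.smul hψ
    simpa using this
  have hsum : Tendsto (fun k => T (xs (ψ k)) + ((ψ k : ℝ) + 1)⁻¹ • xs (ψ k)) atTop
      (𝓝 (T xb)) := by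
    have := hT.add hsmul
    simpa using this
  have hconst : Tendsto (fun _ : ℕ => β) atTop (𝓝 β) := tendsto_const_nhds
  have : (fun k => T (xs (ψ k)) + ((ψ k : ℝ) + 1)⁻¹ • xs (ψ k)) = fun _ => β := by
    funext k; exact hxspec (ψ k)
  rw [this] at hsum
  exact tendsto_nhds_unique hsum hconst


variable {X : Type*} [NormedAddCommGroup X] [NormedSpace ℝ X]

/-- Representation of linear functionals through the coordinates. -/
lemma repr_sum (u : (Fin n → ℝ) →ₗ[ℝ] X) (G : StrongDual ℝ X) (x : Fin n → ℝ) :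
    ∑ i, x i * G (u (Pi.single i 1)) = G (u x) := by
  have hx : x = ∑ i, x i • (Pi.single i 1 : Fin n → ℝ) := by
    funext j
    simp only [Finset.sum_apply, Pi.smul_apply, Pi.single_apply, smul_eq_mul]
    rw [Finset.sum_eq_single j]
    · simp
    · intro i _ hij
      simp [Ne.symm hij]
    · intro h; exact absurd (Finset.mem_univ j) h
  conv_rhs => rw [hx]
  rw [map_sum, map_sum]
  apply Finset.sum_congr rfl
  intro i _
  rw [map_smul, map_smul]
  simp

/-- Galerkin: solvability of the projected problem on a finite-dimensional subspace. -/
theorem galerkin (F : X → StrongDual ℝ X)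
    (hhemi : ∀ u v : X, Continuous fun t : ℝ => F (u + t • v) v)
    (hmono : ∀ u v : X, 0 ≤ F u (u - v) - F v (u - v))
    (b : StrongDual ℝ X) (R : ℝ)
    (hcb : ∀ x : X, F x x ≤ b x → ‖x‖ < R)
    (Y : Submodule ℝ X) (hY : FiniteDimensional ℝ Y) :
    ∃ v ∈ Y, ∀ w ∈ Y, F v w = b w := by
  haveI := hY
  set m := Module.finrank ℝ Y with hm
  set B : Module.Basis (Fin m) ℝ Y := Module.finBasis ℝ Y with hB
  set e : Y ≃ₗ[ℝ] (Fin m → ℝ) := B.equivFun with he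
  set u : (Fin m → ℝ) →ₗ[ℝ] X := Y.subtype.comp (e.symm : (Fin m → ℝ) ≃ₗ[ℝ] Y).toLinearMap
    with hu
  have humem : ∀ x, u x ∈ Y := fun x => (e.symm x).2
  have husurj : ∀ w ∈ Y, ∃ x, u x = w := by
    intro w hw
    exact ⟨e ⟨w, hw⟩, by simp [hu]⟩
  set T : (Fin m → ℝ) → (Fin m → ℝ) := fun x i => F (u x) (u (Pi.single i 1)) with hT
  set β : Fin m → ℝ := fun i => b (u (Pi.single i 1)) with hβ
  have hTd : ∀ x v, dotp (T x) v = F (u x) (u v) := by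
    intro x v
    unfold dotp
    rw [← repr_sum u (F (u x)) v]
    exact Finset.sum_congr rfl fun i _ => mul_comm _ _
  have hβd : ∀ v, dotp β v = b (u v) := by
    intro v
    unfold dotp
    rw [← repr_sum u b v]
    exact Finset.sum_congr rfl fun i _ => mul_comm _ _
  have hmonoT : ∀ x y, 0 ≤ dotp (T x - T y) (x - y) := by
    intro x y
    have h1 : dotp (T x - T y) (x - y) = dotp (T x) (x - y) - dotp (T y) (x - y) := by
      unfold dotp
      rw [← Finset.sum_sub_distrib]
      exact Finset.sum_congr rfl fun i _ => by simp [sub_mul]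
    rw [h1, hTd, hTd, map_sub u x y]
    exact hmono (u x) (u y)
  have hhemiT : ∀ x v, Continuous fun t : ℝ => dotp (T (x + t • v)) v := by
    intro x v
    have h1 : (fun t : ℝ => dotp (T (x + t • v)) v)
        = fun t : ℝ => F (u x + t • u v) (u v) := by
      funext t
      rw [hTd, map_add, map_smul]
    rw [h1]
    exact hhemi (u x) (u v)
  -- the a-priori bound
  set eL := LinearMap.toContinuousLinearMap (e.toLinearMap) with heL
  set K : ℝ := ‖eL‖ with hK
  have hcoT : ∀ x, dotp (T x) x ≤ dotp β x → dotp x x ≤ (m : ℝ) * ((K * R) * (K * R)) := by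
    intro x hx
    rw [hTd, hβd] at hx
    have hux : ‖u x‖ < R := hcb (u x) hx
    have hxnorm : ‖x‖ ≤ K * R := by
      have h1 : x = eL (e.symm x) := by simp [heL]
      have h2 : ‖x‖ ≤ K * ‖e.symm x‖ := by
        conv_lhs => rw [h1]
        exact eL.le_opNorm _
      have h3 : ‖(e.symm x : Y)‖ = ‖u x‖ := rfl
      have h4 : ‖e.symm x‖ < R := by rw [h3]; exact hux
      calc ‖x‖ ≤ K * ‖e.symm x‖ := h2
        _ ≤ K * R := mul_le_mul_of_nonneg_left (le_of_lt h4) (norm_nonneg eL)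
    have hxi : ∀ i, x i * x i ≤ (K * R) * (K * R) := by
      intro i
      have h5 : |x i| ≤ ‖x‖ := by
        rw [← Real.norm_eq_abs]; exact norm_le_pi_norm x i
      have h6 : |x i| ≤ K * R := le_trans h5 hxnorm
      calc x i * x i = |x i| * |x i| := (abs_mul_abs_self _).symm
        _ ≤ (K * R) * (K * R) := mul_le_mul h6 h6 (abs_nonneg _) (le_trans (abs_nonneg _) h6)
    calc dotp x x ≤ ∑ _i : Fin m, (K * R) * (K * R) :=
          Finset.sum_le_sum fun i _ => hxi i
      _ = (m : ℝ) * ((K * R) * (K * R)) := by simp [Finset.sum_const, mul_comm]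
  obtain ⟨xb, hxb⟩ := findim_solve T hmonoT hhemiT β _ hcoT
  refine ⟨u xb, humem xb, ?_⟩
  intro w hw
  obtain ⟨xw, hxw⟩ := husurj w hw
  rw [← hxw]
  have h1 : F (u xb) (u xw) = dotp (T xb) xw := (hTd xb xw).symm
  rw [h1, hxb, hβd]

end

end BrowderMintyAux

open BrowderMintyAux

set_option maxHeartbeats 1000000 in
/-- Browder–Minty theorem: a hemicontinuous, monotone, coercive map from a real
reflexive Banach space to its dual is surjective. Reflexivity is expressed by
surjectivity of the canonical inclusion into the double dual. -/
theorem stmt_14 {X : Type*} [NormedAddCommGroup X] [NormedSpace ℝ X]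
    [CompleteSpace X]
    (hrefl : Function.Surjective (inclusionInDoubleDual ℝ X))
    (F : X → StrongDual ℝ X)
    (hhemi : ∀ u v : X, Continuous fun t : ℝ => F (u + t • v) v)
    (hmono : ∀ u v : X, 0 ≤ F u (u - v) - F v (u - v))
    (hcoer : ∀ M > (0 : ℝ), ∃ R > (0 : ℝ), ∀ x : X, ‖x‖ ≥ R → F x x ≥ M * ‖x‖) :
    Function.Surjective F := by
  classical
  intro b
  obtain ⟨R, hRpos, hcoR⟩ := hcoer (‖b‖ + 1) (by positivity)
  have hcb : ∀ x : X, F x x ≤ b x → ‖x‖ < R := by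
    intro x hx
    by_contra hge
    push_neg at hge
    have h1 := hcoR x hge
    have h2 : b x ≤ ‖b‖ * ‖x‖ := by
      calc b x ≤ |b x| := le_abs_self _
        _ = ‖b x‖ := (Real.norm_eq_abs _).symm
        _ ≤ ‖b‖ * ‖x‖ := b.le_opNorm x
    have h3 : (0:ℝ) < ‖x‖ := lt_of_lt_of_le hRpos hge
    nlinarith
  have hgal : ∀ Y : {Y : Submodule ℝ X // FiniteDimensional ℝ Y},
      ∃ v ∈ Y.1, ∀ w ∈ Y.1, F v w = b w :=
    fun Y => galerkin F hhemi hmono b R hcb Y.1 Y.2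
  set D := {Y : Submodule ℝ X // FiniteDimensional ℝ Y} with hD
  set sol : D → X := fun Y => (hgal Y).choose with hsol
  have hsolmem : ∀ Y : D, sol Y ∈ Y.1 := fun Y => (hgal Y).choose_spec.1
  have hsoleq : ∀ Y : D, ∀ w ∈ Y.1, F (sol Y) w = b w := fun Y => (hgal Y).choose_spec.2
  have hsolnorm : ∀ Y : D, ‖sol Y‖ ≤ R := by
    intro Y
    exact le_of_lt (hcb _ (le_of_eq (hsoleq Y (sol Y) (hsolmem Y))))
  haveI : Nonempty D := ⟨⟨⊥, inferInstance⟩⟩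
  set L : Filter D := ⨅ Y₀ : D, Filter.principal {Y : D | Y₀.1 ≤ Y.1} with hLf
  have hLdir : Directed (· ≥ ·) fun Y₀ : D => Filter.principal {Y : D | Y₀.1 ≤ Y.1} := by
    intro Y₁ Y₂
    haveI := Y₁.2; haveI := Y₂.2
    refine ⟨⟨Y₁.1 ⊔ Y₂.1, inferInstance⟩, ?_, ?_⟩
    · refine Filter.principal_mono.2 fun Y hY => ?_
      exact le_trans (le_sup_left : Y₁.1 ≤ Y₁.1 ⊔ Y₂.1) hY
    · refine Filter.principal_mono.2 fun Y hY => ?_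
      exact le_trans (le_sup_right : Y₂.1 ≤ Y₁.1 ⊔ Y₂.1) hY
  haveI hLne : L.NeBot := by
    refine Filter.iInf_neBot_of_directed hLdir ?_
    intro Y₀
    exact Filter.principal_neBot_iff.2 ⟨Y₀, le_refl Y₀.1⟩
  have hLmem : ∀ Y₀ : D, {Y : D | Y₀.1 ≤ Y.1} ∈ L :=
    fun Y₀ => Filter.mem_iInf_of_mem Y₀ (Filter.mem_principal_self _)
  -- push into the double dual with the weak-* topology
  set J : D → WeakDual ℝ (StrongDual ℝ X) :=
    fun Y => StrongDual.toWeakDual (inclusionInDoubleDual ℝ X (sol Y)) with hJ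
  have hJball : ∀ Y, J Y ∈ WeakDual.toStrongDual ⁻¹' Metric.closedBall 0 R := by
    intro Y
    simp only [Set.mem_preimage, Metric.mem_closedBall, dist_zero_right]
    have h1 : ‖inclusionInDoubleDual ℝ X (sol Y)‖ ≤ ‖sol Y‖ := by
      refine ContinuousLinearMap.opNorm_le_bound _ (norm_nonneg _) fun g => ?_
      rw [dual_def]
      calc ‖g (sol Y)‖ ≤ ‖g‖ * ‖sol Y‖ := g.le_opNorm _
        _ = ‖sol Y‖ * ‖g‖ := mul_comm _ _
    exact le_trans (le_of_eq (dist_zero_right (inclusionInDoubleDual ℝ X (sol Y)))) (le_trans h1 (hsolnorm Y))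
  have hmaps : Filter.map J L ≤ Filter.principal
      (WeakDual.toStrongDual ⁻¹' Metric.closedBall 0 R) := by
    rw [Filter.le_principal_iff, Filter.mem_map]
    exact Filter.univ_mem' hJball
  obtain ⟨φ, hφmem, hφcl⟩ :=
    (WeakDual.isCompact_closedBall (0 : StrongDual ℝ (StrongDual ℝ X)) R).exists_mapClusterPt hmaps
  obtain ⟨v₀, hv₀⟩ := hrefl (WeakDual.toStrongDual φ)
  have hφapp : ∀ g : StrongDual ℝ X, φ g = g v₀ := by
    intro g
    have h1 : inclusionInDoubleDual ℝ X v₀ g = g v₀ := dual_def ℝ X v₀ g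
    rw [← h1, hv₀]
    rfl
  have key : ∀ w : X, 0 ≤ b (v₀ - w) - F w (v₀ - w) := by
    intro w
    set ℓ : StrongDual ℝ X := b - F w with hℓ
    have hYw : FiniteDimensional ℝ (Submodule.span ℝ {w}) := inferInstance
    set Yw : D := ⟨Submodule.span ℝ {w}, hYw⟩ with hYwd
    have hwmem : w ∈ Yw.1 := Submodule.mem_span_singleton_self w
    have hev : ∀ Y ∈ {Y : D | Yw.1 ≤ Y.1}, ℓ w ≤ J Y ℓ := by
      intro Y hY
      have hwY : w ∈ Y.1 := hY hwmem
      have h0 := hmono (sol Y) w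
      have h1 : F (sol Y) (sol Y - w) = b (sol Y - w) := by
        rw [map_sub, map_sub, hsoleq Y (sol Y) (hsolmem Y), hsoleq Y w hwY]
      have h2 : (0:ℝ) ≤ b (sol Y - w) - F w (sol Y - w) := by rw [← h1]; exact h0
      have h3 : J Y ℓ = ℓ (sol Y) := dual_def ℝ X (sol Y) ℓ
      rw [h3, hℓ]
      simp only [ContinuousLinearMap.sub_apply] at h2 ⊢
      rw [map_sub b, map_sub (F w)] at h2
      linarith
    have hcl2 : MapClusterPt (φ ℓ) L (fun Y => J Y ℓ) := by
      have hc : ContinuousAt (fun ψ : WeakDual ℝ (StrongDual ℝ X) => ψ ℓ) φ :=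
        (WeakDual.eval_continuous ℓ).continuousAt
      exact hφcl.continuousAt_comp hc
    have hmem2 : Set.Ici (ℓ w) ∈ Filter.map (fun Y => J Y ℓ) L := by
      rw [Filter.mem_map]
      filter_upwards [hLmem Yw] with Y hY using hev Y hY
    have hclosed : φ ℓ ∈ closure (Set.Ici (ℓ w)) :=
      mem_closure_iff_clusterPt.2 (hcl2.clusterPt.mono (Filter.le_principal_iff.2 hmem2))
    rw [closure_Ici] at hclosed
    have h4 : ℓ w ≤ ℓ v₀ := by rw [← hφapp ℓ]; exact hclosed
    rw [hℓ] at h4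
    simp only [ContinuousLinearMap.sub_apply] at h4
    rw [map_sub b, map_sub (F w)]
    linarith
  have hFv : ∀ v : X, F v₀ v = b v := by
    have hle : ∀ v : X, b v ≤ F v₀ v := by
      intro v
      have h1 : ∀ t : ℝ, 0 < t → b v ≤ F (v₀ + t • v) v := by
        intro t ht
        have hk := key (v₀ + t • v)
        have hsub : v₀ - (v₀ + t • v) = -(t • v) := by abel
        rw [hsub] at hk
        rw [map_neg, map_neg, map_smul, map_smul] at hk
        simp only [smul_eq_mul] at hk
        nlinarith
      have h2 : Filter.Tendsto (fun t : ℝ => F (v₀ + t • v) v) (nhdsWithin 0 (Set.Ioi 0))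
          (nhds (F v₀ v)) := by
        have h3 := (hhemi v₀ v).tendsto 0
        rw [show v₀ + (0:ℝ) • v = v₀ by simp] at h3
        exact h3.mono_left nhdsWithin_le_nhds
      exact ge_of_tendsto h2 (eventually_nhdsWithin_of_forall fun t ht => h1 t ht)
    intro v
    have ha := hle v
    have hb2 := hle (-v)
    rw [map_neg, map_neg] at hb2
    linarith
  exact ⟨v₀, ContinuousLinearMap.ext hFv⟩
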